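/- For partitions λ, μ with at most k parts, the set {α : α is a distinct permutation of μ and α_i ≤ λ_i for all i} is non-empty if and only if μ ⊆ λ (i.e., μ_i ≤ λ_i for all i), and in that case its cardinality equals the product over i ≥ 1 of binomial(λ'_i − μ'_{i+1}, μ'_i − μ'_{i+1}), where λ' and μ' denote conjugate partitions and binomial coefficients with negative arguments are zero. -/

import Mathlib

open Finset

/-- The conjugate partition: `conjPart l i = #{j : l j ≥ i}` (so `conjPart l i` is `l'_i`). -/
def conjPart {k : ℕ} (l : Fin k → ℕ) (i : ℕ) : ℕ :=
  (Finset.univ.filter fun j => i ≤ l j).card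

/-- The set of distinct permutations `α` of `μ` with `α i ≤ λ i` for all `i`. -/
def permsBelow {k : ℕ} (l m : Fin k → ℕ) : Set (Fin k → ℕ) :=
  {a | (∃ w : Equiv.Perm (Fin k), a = m ∘ w) ∧ ∀ i, a i ≤ l i}

section aux

variable {k : ℕ}

lemma card_filter_comp_perm (w : Equiv.Perm (Fin k)) (p : Fin k → Prop) [DecidablePred p] :
    (Finset.univ.filter fun i => p (w i)).card = (Finset.univ.filter p).card := by
  rw [← Finset.card_image_of_injective (Finset.univ.filter fun i => p (w i)) w.injective]
  congr 1
  ext j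
  simp only [Finset.mem_image, Finset.mem_filter, Finset.mem_univ, true_and]
  constructor
  · rintro ⟨i, hi, rfl⟩; exact hi
  · intro hj; exact ⟨w.symm j, by simpa using hj, by simp⟩

lemma exists_perm_of_fiber_counts (f g : Fin k → ℕ)
    (h : ∀ c, (Finset.univ.filter fun i => f i = c).card
      = (Finset.univ.filter fun i => g i = c).card) :
    ∃ w : Equiv.Perm (Fin k), f = g ∘ w := by
  have e : ∀ c, {i : Fin k // f i = c} ≃ {i : Fin k // g i = c} := fun c =>
    Fintype.equivOfCardEq (by
      rw [Fintype.card_subtype, Fintype.card_subtype]; exact h c)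
  refine ⟨((Equiv.sigmaFiberEquiv f).symm.trans
    (Equiv.sigmaCongrRight e)).trans (Equiv.sigmaFiberEquiv g), funext fun x => ?_⟩
  simp only [Function.comp_apply, Equiv.trans_apply, Equiv.sigmaCongrRight_apply]
  have : (Equiv.sigmaFiberEquiv f).symm x = ⟨f x, ⟨x, rfl⟩⟩ := rfl
  rw [this]
  exact ((e (f x)) ⟨x, rfl⟩).2.symm

lemma conjPart_anti (g : Fin k → ℕ) : Antitone (conjPart g) := by
  intro a b hab
  apply Finset.card_le_card
  intro x hx
  simp only [Finset.mem_filter, Finset.mem_univ, true_and] at hx ⊢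
  omega

noncomputable def PB (l m : Fin k → ℕ) : Finset (Fin k → ℕ) :=
  (Finset.univ.image fun w : Equiv.Perm (Fin k) => m ∘ ⇑w).filter
    fun a => ∀ i, a i ≤ l i

lemma mem_PB {l m a : Fin k → ℕ} :
    a ∈ PB l m ↔ (∃ w : Equiv.Perm (Fin k), a = m ∘ ⇑w) ∧ ∀ i, a i ≤ l i := by
  simp only [PB, Finset.mem_filter, Finset.mem_image, Finset.mem_univ, true_and]
  constructor
  · rintro ⟨⟨w, hw⟩, h2⟩; exact ⟨⟨w, hw.symm⟩, h2⟩
  · rintro ⟨⟨w, hw⟩, h2⟩; exact ⟨⟨w, hw.symm⟩, h2⟩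

lemma permsBelow_eq_PB (l m : Fin k → ℕ) : permsBelow l m = ↑(PB l m) := by
  ext a
  simp only [permsBelow, Set.mem_setOf_eq, Finset.coe_filter, Finset.mem_coe, mem_PB]

end aux

section fiber

variable {k : ℕ}

lemma fiber_card (l m β : Fin k → ℕ) (hβ : β ∈ PB (fun i => l i - 1) (fun i => m i - 1)) :
    ((PB l m).filter fun a => (fun i => a i - 1) = β).card
      = (conjPart l 1 - conjPart m 2).choose (conjPart m 1 - conjPart m 2) := by
  obtain ⟨⟨w, hw⟩, hβl⟩ := mem_PB.1 hβ
  set Sβ : Finset (Fin k) := Finset.univ.filter fun i => 1 ≤ β i with hSβdef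
  set T1 : Finset (Fin k) := Finset.univ.filter fun i => 1 ≤ l i with hT1def
  have hSβcard : Sβ.card = conjPart m 2 := by
    rw [hSβdef, hw]
    have h1 : (Finset.univ.filter fun i => 1 ≤ ((fun j => m j - 1) ∘ ⇑w) i).card
        = (Finset.univ.filter fun j => 1 ≤ m j - 1).card :=
      card_filter_comp_perm w (fun j => 1 ≤ m j - 1)
    rw [h1]
    unfold conjPart
    congr 1
    ext j
    simp only [Finset.mem_filter, Finset.mem_univ, true_and]
    omega
  have hSβT1 : Sβ ⊆ T1 := by
    intro i hi
    simp only [hSβdef, hT1def, Finset.mem_filter, Finset.mem_univ, true_and] at hi ⊢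
    have := hβl i
    omega
  have hM2r : conjPart m 2 ≤ conjPart m 1 := conjPart_anti m (by norm_num)
  have hT1card : T1.card = conjPart l 1 := rfl
  -- the set of admissible supports
  set D : Finset (Finset (Fin k)) :=
    (Finset.powersetCard (conjPart m 1) T1).filter fun S => Sβ ⊆ S with hDdef
  have hmemD : ∀ S, S ∈ D ↔ (S ⊆ T1 ∧ S.card = conjPart m 1) ∧ Sβ ⊆ S := by
    intro S
    simp only [hDdef, Finset.mem_filter, Finset.mem_powersetCard]
  -- Part I : fiber ≃ D
  have hpart1 : ((PB l m).filter fun a => (fun i => a i - 1) = β).card = D.card := by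
    apply Finset.card_bij (fun α _ => Finset.univ.filter fun i => 1 ≤ α i)
    · -- maps into D
      intro α hα
      rw [Finset.mem_filter] at hα
      obtain ⟨hα1, hα2⟩ := hα
      obtain ⟨⟨wα, hwα⟩, hαl⟩ := mem_PB.1 hα1
      rw [hmemD]
      refine ⟨⟨?_, ?_⟩, ?_⟩
      · intro i hi
        simp only [Finset.mem_filter, Finset.mem_univ, true_and, hT1def] at hi ⊢
        exact le_trans hi (hαl i)
      · rw [hwα]
        exact card_filter_comp_perm wα (fun j => 1 ≤ m j)
      · intro i hi
        simp only [hSβdef, Finset.mem_filter, Finset.mem_univ, true_and] at hi ⊢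
        have h3 : α i - 1 = β i := congrFun hα2 i
        omega
    · -- injective
      intro α₁ h₁ α₂ h₂ heq
      rw [Finset.mem_filter] at h₁ h₂
      funext i
      have e1 : α₁ i - 1 = β i := congrFun h₁.2 i
      have e2 : α₂ i - 1 = β i := congrFun h₂.2 i
      have e3 : (1 ≤ α₁ i) ↔ (1 ≤ α₂ i) := by
        have : i ∈ Finset.univ.filter (fun j => 1 ≤ α₁ j)
            ↔ i ∈ Finset.univ.filter (fun j => 1 ≤ α₂ j) := by rw [heq]
        simpa using this
      omega
    · -- surjective
      intro S hS
      rw [hmemD] at hS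
      obtain ⟨⟨hST1, hScard⟩, hSβS⟩ := hS
      have hβ0 : ∀ i, i ∉ S → β i = 0 := by
        intro i hi
        by_contra hne
        exact hi (hSβS (by simp only [hSβdef, Finset.mem_filter, Finset.mem_univ, true_and]; omega))
      refine ⟨fun i => if i ∈ S then β i + 1 else 0, ?_, ?_⟩
      · rw [Finset.mem_filter]
        constructor
        · rw [mem_PB]
          constructor
          · -- existence of permutation, via fiber counts
            apply exists_perm_of_fiber_counts
            intro c
            match c with
            | 0 =>
              have hle : (Finset.univ.filter fun i => (if i ∈ S then β i + 1 else 0) = 0)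
                  = Finset.univ \ S := by
                ext i
                by_cases h : i ∈ S <;> simp [h]
              have hri : (Finset.univ.filter fun i => m i = 0)
                  = Finset.univ \ (Finset.univ.filter fun i => 1 ≤ m i) := by
                ext i
                simp only [Finset.mem_filter, Finset.mem_univ, true_and, Finset.mem_sdiff]
                omega
              rw [hle, hri, Finset.card_sdiff_of_subset (Finset.subset_univ _),
                Finset.card_sdiff_of_subset (Finset.filter_subset _ _), hScard]
              rfl
            | 1 =>
              have hle : (Finset.univ.filter fun i => (if i ∈ S then β i + 1 else 0) = 1)
                  = S \ Sβ := by
                ext i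
                by_cases h : i ∈ S <;>
                  simp only [Finset.mem_filter, Finset.mem_univ, true_and, Finset.mem_sdiff, h,
                    if_pos, if_neg, hSβdef, true_and, false_and, iff_false, not_false_iff] <;>
                  omega
              have hri : (Finset.univ.filter fun i => m i = 1)
                  = (Finset.univ.filter fun i => 1 ≤ m i)
                    \ (Finset.univ.filter fun i => 2 ≤ m i) := by
                ext i
                simp only [Finset.mem_filter, Finset.mem_univ, true_and, Finset.mem_sdiff]
                omega
              rw [hle, hri, Finset.card_sdiff_of_subset hSβS, Finset.card_sdiff_of_subset (by
                intro i hi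
                simp only [Finset.mem_filter, Finset.mem_univ, true_and] at hi ⊢
                omega), hScard, hSβcard]
              rfl
            | (d+2) =>
              have hle : (Finset.univ.filter fun i => (if i ∈ S then β i + 1 else 0) = d + 2)
                  = Finset.univ.filter fun i => β i = d + 1 := by
                ext i
                by_cases h : i ∈ S
                · simp only [Finset.mem_filter, Finset.mem_univ, true_and, h, if_pos]
                  omega
                · simp only [Finset.mem_filter, Finset.mem_univ, true_and, h, if_neg,
                    not_false_iff]
                  have := hβ0 i h
                  omega
              rw [hle, hw]
              have h1 : (Finset.univ.filter fun i => ((fun j => m j - 1) ∘ ⇑w) i = d + 1).card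
                  = (Finset.univ.filter fun j => m j - 1 = d + 1).card :=
                card_filter_comp_perm w (fun j => m j - 1 = d + 1)
              rw [h1]
              congr 1
              ext j
              simp only [Finset.mem_filter, Finset.mem_univ, true_and]
              omega
          · -- dominated by l
            intro i
            by_cases h : i ∈ S
            · simp only [h, if_pos]
              have h1 := hβl i
              have h2 := hST1 h
              simp only [hT1def, Finset.mem_filter, Finset.mem_univ, true_and] at h2
              omega
            · simp [h]
        · -- subtracting one gives β
          funext i
          by_cases h : i ∈ S
          · simp [h]
          · simp only [h, if_neg, not_false_iff]
            have := hβ0 i h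
            omega
      · -- support is S
        ext i
        by_cases h : i ∈ S <;> simp [h]
  -- Part II : D.card = choose
  have hpart2 : D.card
      = (Finset.powersetCard (conjPart m 1 - conjPart m 2) (T1 \ Sβ)).card := by
    apply Finset.card_bij (fun S _ => S \ Sβ)
    · intro S hS
      rw [hmemD] at hS
      rw [Finset.mem_powersetCard]
      exact ⟨Finset.sdiff_subset_sdiff hS.1.1 (le_refl _),
        by rw [Finset.card_sdiff_of_subset hS.2, hS.1.2, hSβcard]⟩
    · intro S₁ h₁ S₂ h₂ heq
      rw [hmemD] at h₁ h₂
      rw [← Finset.sdiff_union_of_subset h₁.2, ← Finset.sdiff_union_of_subset h₂.2, heq]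
    · intro t ht
      rw [Finset.mem_powersetCard] at ht
      obtain ⟨htsub, htcard⟩ := ht
      have hdisj : Disjoint t Sβ :=
        Finset.disjoint_left.2 fun i hi => (Finset.mem_sdiff.1 (htsub hi)).2
      refine ⟨t ∪ Sβ, ?_, ?_⟩
      · rw [hmemD]
        refine ⟨⟨?_, ?_⟩, Finset.subset_union_right⟩
        · exact Finset.union_subset (htsub.trans (Finset.sdiff_subset)) hSβT1
        · rw [Finset.card_union_of_disjoint hdisj, htcard, hSβcard]
          exact Nat.sub_add_cancel hM2r
      · rw [Finset.union_sdiff_distrib, Finset.sdiff_eq_empty_iff_subset.2 (le_refl _),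
          Finset.union_empty, Finset.sdiff_eq_self_of_disjoint hdisj]
  rw [hpart1, hpart2, Finset.card_powersetCard, Finset.card_sdiff_of_subset hSβT1, hT1card, hSβcard]

end fiber

section key

lemma conjPart_sub_one {k : ℕ} (g : Fin k → ℕ) (v : ℕ) :
    conjPart (fun i => g i - 1) (v + 1) = conjPart g (v + 2) := by
  unfold conjPart
  congr 1
  ext j
  simp only [Finset.mem_filter, Finset.mem_univ, true_and]
  omega

lemma key_zero {k : ℕ} (l m : Fin k → ℕ) (hm : ∀ i, m i = 0) :
    (PB l m).card = ∏ᶠ i : ℕ, Nat.choose (conjPart l (i + 1) - conjPart m (i + 2))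
      (conjPart m (i + 1) - conjPart m (i + 2)) := by
  have h1 : PB l m = {m} := by
    ext a
    rw [mem_PB, Finset.mem_singleton]
    constructor
    · rintro ⟨⟨w, rfl⟩, _⟩
      funext i
      simp only [Function.comp_apply, hm]
    · rintro rfl
      exact ⟨⟨1, by funext i; simp⟩, fun i => by simp [hm]⟩
  have h2 : ∀ v : ℕ, conjPart m (v + 1) = 0 := by
    intro v
    unfold conjPart
    rw [Finset.card_eq_zero, Finset.filter_eq_empty_iff]
    intro x _
    simp [hm]
  rw [h1, Finset.card_singleton]
  symm
  apply finprod_eq_one_of_forall_eq_one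
  intro i
  have e1 : conjPart m (i + 2) = 0 := h2 (i + 1)
  rw [h2 i, e1]
  simp

lemma key : ∀ (n : ℕ) {k : ℕ} (l m : Fin k → ℕ), (∑ i, m i) ≤ n →
    (PB l m).card = ∏ᶠ i : ℕ, Nat.choose (conjPart l (i + 1) - conjPart m (i + 2))
      (conjPart m (i + 1) - conjPart m (i + 2)) := by
  intro n
  induction n with
  | zero =>
    intro k l m hsum
    apply key_zero
    intro i
    have := Finset.single_le_sum (f := m) (fun j _ => Nat.zero_le _) (Finset.mem_univ i)
    omega
  | succ n ih =>
    intro k l m hsum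
    by_cases hz : ∀ i, m i = 0
    · exact key_zero l m hz
    push_neg at hz
    obtain ⟨j, hj⟩ := hz
    set l' : Fin k → ℕ := fun i => l i - 1 with hl'def
    set m' : Fin k → ℕ := fun i => m i - 1 with hm'def
    have hsum' : (∑ i, m' i) ≤ n := by
      have hlt : (∑ i, m' i) < ∑ i, m i := by
        apply Finset.sum_lt_sum (fun i _ => by simp only [hm'def]; omega)
        exact ⟨j, Finset.mem_univ j, by simp only [hm'def]; omega⟩
      omega
    -- Fubini over the fibers of subtracting one
    have hmap : ∀ a ∈ PB l m, (fun i => a i - 1) ∈ PB l' m' := by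
      intro a ha
      obtain ⟨⟨w, hw⟩, hal⟩ := mem_PB.1 ha
      rw [mem_PB]
      constructor
      · exact ⟨w, by rw [hw]; funext i; simp [hm'def]⟩
      · intro i
        have := hal i
        simp only [hl'def]
        omega
    have hcard := Finset.card_eq_sum_card_fiberwise hmap
    have hfib : ∀ β ∈ PB l' m',
        ((PB l m).filter fun a => (fun i => a i - 1) = β).card
          = (conjPart l 1 - conjPart m 2).choose (conjPart m 1 - conjPart m 2) := by
      intro β hβ
      exact fiber_card l m β hβ
    rw [Finset.sum_congr rfl hfib, Finset.sum_const, smul_eq_mul] at hcard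
    rw [hcard, ih l' m' hsum']
    -- now the finprod bookkeeping
    set f : ℕ → ℕ := fun i => Nat.choose (conjPart l (i + 1) - conjPart m (i + 2))
      (conjPart m (i + 1) - conjPart m (i + 2)) with hfdef
    have hshift : (fun i : ℕ => Nat.choose (conjPart l' (i + 1) - conjPart m' (i + 2))
        (conjPart m' (i + 1) - conjPart m' (i + 2))) = fun i => f (i + 1) := by
      funext i
      have e1 : conjPart l' (i + 1) = conjPart l (i + 2) := conjPart_sub_one l i
      have e2 : conjPart m' (i + 2) = conjPart m (i + 3) := conjPart_sub_one m (i + 1)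
      have e3 : conjPart m' (i + 1) = conjPart m (i + 2) := conjPart_sub_one m i
      rw [e1, e2, e3]
    have hsupp : ∀ i : ℕ, f i ≠ 1 → i + 1 ≤ ∑ j, m j := by
      intro i hf
      have h1 : conjPart m (i + 2) < conjPart m (i + 1) := by
        by_contra hcon
        have : conjPart m (i + 1) - conjPart m (i + 2) = 0 := by omega
        rw [hfdef] at hf
        simp only [this, Nat.choose_zero_right] at hf
        exact hf rfl
      have h2 : 0 < conjPart m (i + 1) := by omega
      rw [conjPart, Finset.card_pos] at h2
      obtain ⟨x, hx⟩ := h2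
      rw [Finset.mem_filter] at hx
      have := Finset.single_le_sum (f := m) (fun j _ => Nat.zero_le _) (Finset.mem_univ x)
      omega
    set N : ℕ := ∑ i, m i with hNdef
    have hN1 : 1 ≤ N := by
      have := Finset.single_le_sum (f := m) (fun j _ => Nat.zero_le _) (Finset.mem_univ j)
      omega
    have hfull : ∏ᶠ i : ℕ, f i = ∏ i ∈ Finset.range (N - 1 + 1), f i := by
      apply finprod_eq_prod_of_mulSupport_subset
      intro i hi
      rw [Function.mem_mulSupport] at hi
      rw [Finset.coe_range, Set.mem_Iio]
      have := hsupp i hi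
      omega
    have htail : ∏ᶠ i : ℕ, f (i + 1) = ∏ i ∈ Finset.range (N - 1), f (i + 1) := by
      apply finprod_eq_prod_of_mulSupport_subset
      intro i hi
      rw [Function.mem_mulSupport] at hi
      rw [Finset.coe_range, Set.mem_Iio]
      have := hsupp (i + 1) hi
      omega
    rw [hshift, htail, hfull, Finset.prod_range_succ']

end key


/-- the set of distinct permutations of `μ` dominated by `λ` is non-empty iff
`μ ⊆ λ`, and in that case its cardinality is
`∏_{i ≥ 1} binom (λ'_i − μ'_{i+1}) (μ'_i − μ'_{i+1})`. -/
theorem stmt0 {k : ℕ} (l m : Fin k → ℕ) (hl : Antitone l) (hm : Antitone m) :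
    ((permsBelow l m).Nonempty ↔ ∀ i, m i ≤ l i) ∧
    ((∀ i, m i ≤ l i) →
      (permsBelow l m).ncard =
        ∏ᶠ i : ℕ, Nat.choose (conjPart l (i + 1) - conjPart m (i + 2))
          (conjPart m (i + 1) - conjPart m (i + 2))) := by
  constructor
  · constructor
    · rintro ⟨a, ⟨w, rfl⟩, hle⟩ i
      -- a = m ∘ w dominated by l; show m i ≤ l i
      set T : Finset (Fin k) := (Finset.Iic i).image w.symm with hTdef
      have hTcard : T.card = (i : ℕ) + 1 := by
        rw [hTdef, Finset.card_image_of_injective _ w.symm.injective, Fin.card_Iic]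
      have hex : ∃ t ∈ T, i ≤ t := by
        by_contra hc
        push_neg at hc
        have hsub : T ⊆ Finset.Iio i := fun t ht => Finset.mem_Iio.2 (hc t ht)
        have := Finset.card_le_card hsub
        rw [hTcard, Fin.card_Iio] at this
        omega
      obtain ⟨t, ht, hit⟩ := hex
      rw [hTdef, Finset.mem_image] at ht
      obtain ⟨j', hj', rfl⟩ := ht
      rw [Finset.mem_Iic] at hj'
      calc m i ≤ m j' := hm hj'
        _ = (m ∘ ⇑w) (w.symm j') := by simp
        _ ≤ l (w.symm j') := hle _
        _ ≤ l i := hl hit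
    · intro h
      exact ⟨m, ⟨1, by funext i; simp⟩, h⟩
  · intro _
    rw [permsBelow_eq_PB, Set.ncard_coe_finset]
    exact key (∑ i, m i) l m le_rfl
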